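/- Let k be a field and m ≥ 1 a natural number. For the category OI of finite sets of natural numbers and strictly order-preserving injections, let P_m denote the projective OI-module sending a finite set S to the free k-vector space on the set of strictly order-preserving injections from {1,…,m} to S, and let Σ denote the shift functor given by precomposition with the self-embedding of OI that adds one new largest element to every object. Then there is an isomorphism of OI-modules Σ P_m ≅ P_m ⊕ P_{m−1}. -/

import Mathlib

open CategoryTheory CategoryTheory.Limits

/-- Objects of the category `OI` : finite sets of natural numbers. -/
structure OIcat where
  carrier : Finset ℕ

/-- The category `OI` : finite sets of natural numbers with strictly order-preserving
injections between them. -/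
instance : Category OIcat where
  Hom S T := { f : S.carrier → T.carrier // StrictMono f }
  id S := ⟨id, fun _ _ h => h⟩
  comp f g := ⟨g.1 ∘ f.1, g.2.comp f.2⟩

/-- A natural number larger than every element of `S`, playing the role of the new
largest element `∗`. -/
def newPt (S : OIcat) : ℕ := S.carrier.sup id + 1

theorem lt_newPt {S : OIcat} {a : ℕ} (h : a ∈ S.carrier) : a < newPt S := by
  have := Finset.le_sup (f := id) h
  simp only [id_eq, newPt] at this ⊢
  omega

theorem newPt_not_mem (S : OIcat) : newPt S ∉ S.carrier := fun h => lt_irrefl _ (lt_newPt h)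

/-- The underlying function of the extension of `f : S ⟶ T` to `S ⊔ {∗} → T ⊔ {∗}`. -/
def embMap {S T : OIcat} (f : S ⟶ T)
    (x : {a : ℕ // a ∈ insert (newPt S) S.carrier}) :
    {a : ℕ // a ∈ insert (newPt T) T.carrier} :=
  if h : x.1 ∈ S.carrier then
    ⟨(f.1 ⟨x.1, h⟩).1, Finset.mem_insert_of_mem (f.1 ⟨x.1, h⟩).2⟩
  else ⟨newPt T, Finset.mem_insert_self _ _⟩

theorem embMap_val_mem {S T : OIcat} (f : S ⟶ T) (x) (h : x.1 ∈ S.carrier) :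
    (embMap f x).1 = (f.1 ⟨x.1, h⟩).1 := by
  rw [embMap, dif_pos h]

theorem embMap_val_not_mem {S T : OIcat} (f : S ⟶ T) (x) (h : x.1 ∉ S.carrier) :
    (embMap f x).1 = newPt T := by
  rw [embMap, dif_neg h]

theorem embMap_strictMono {S T : OIcat} (f : S ⟶ T) : StrictMono (embMap f) := by
  intro x y hxy
  have hlt : x.1 < y.1 := hxy
  rw [← Subtype.coe_lt_coe]
  by_cases hx : x.1 ∈ S.carrier <;> by_cases hy : y.1 ∈ S.carrier
  · rw [embMap_val_mem f x hx, embMap_val_mem f y hy]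
    exact Subtype.coe_lt_coe.mpr (f.2 (Subtype.mk_lt_mk.mpr hlt))
  · rw [embMap_val_mem f x hx, embMap_val_not_mem f y hy]
    exact lt_newPt (f.1 ⟨x.1, hx⟩).2
  · have hx' := x.2
    rw [Finset.mem_insert] at hx'
    have hxv : x.1 = newPt S := hx'.resolve_right hx
    rw [hxv] at hlt
    exact absurd hlt (not_lt_of_gt (lt_newPt hy))
  · have hx' := x.2
    have hy' := y.2
    rw [Finset.mem_insert] at hx' hy'
    rw [hx'.resolve_right hx, hy'.resolve_right hy] at hlt
    exact absurd hlt (lt_irrefl _)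

/-- The self-embedding `ι : OI → OI`, sending `S` to `S ⊔ {∗}` where `∗` is a new element
larger than all elements of `S` (re-encoded as a natural number), and extending every
morphism by `∗ ↦ ∗`. -/
def selfEmb : OIcat ⥤ OIcat where
  obj S := ⟨insert (newPt S) S.carrier⟩
  map f := ⟨embMap f, embMap_strictMono f⟩
  map_id S := by
    apply Subtype.ext
    funext x
    apply Subtype.ext
    by_cases h : x.1 ∈ S.carrier
    · rw [embMap_val_mem (𝟙 S) x h]
      rfl
    · rw [embMap_val_not_mem (𝟙 S) x h]
      have hx' := x.2
      rw [Finset.mem_insert] at hx'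
      exact (hx'.resolve_right h).symm
  map_comp {S T U} f g := by
    apply Subtype.ext
    funext x
    apply Subtype.ext
    show (embMap (f ≫ g) x).1 = (embMap g (embMap f x)).1
    by_cases h : x.1 ∈ S.carrier
    · rw [embMap_val_mem (f ≫ g) x h]
      have h2 : (embMap f x).1 ∈ T.carrier := by
        rw [embMap_val_mem f x h]; exact (f.1 ⟨x.1, h⟩).2
      rw [embMap_val_mem g _ h2]
      have heq : (⟨(embMap f x).1, h2⟩ : {a : ℕ // a ∈ T.carrier}) = f.1 ⟨x.1, h⟩ :=
        Subtype.ext (embMap_val_mem f x h)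
      show ((g.1 (f.1 ⟨x.1, h⟩)) : ℕ) = ((g.1 ⟨(embMap f x).1, h2⟩) : ℕ)
      exact congrArg (fun t => ((g.1 t) : ℕ)) heq.symm
    · rw [embMap_val_not_mem (f ≫ g) x h]
      have h2 : (embMap f x).1 ∉ T.carrier := by
        rw [embMap_val_not_mem f x h]; exact newPt_not_mem T
      rw [embMap_val_not_mem g _ h2]

/-- The object `{1, …, m}` of `OI`. -/
def stdObj (m : ℕ) : OIcat := ⟨Finset.Icc 1 m⟩

/-- The projective `OI`-module `P_m = k[OI({1,…,m}, -)]`, sending a finite set `S` to the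
free `k`-vector space on the set of strictly order-preserving injections `{1,…,m} → S`. -/
noncomputable def Pmod (k : Type) [Field k] (m : ℕ) : OIcat ⥤ ModuleCat.{0} k :=
  coyoneda.obj (Opposite.op (stdObj m)) ⋙ ModuleCat.free k

instance (k : Type) [Field k] : HasFiniteBiproducts (OIcat ⥤ ModuleCat.{0} k) :=
  HasFiniteBiproducts.of_hasFiniteProducts

instance (k : Type) [Field k] : HasBinaryBiproducts (OIcat ⥤ ModuleCat.{0} k) :=
  hasBinaryBiproducts_of_finite_biproducts _

theorem OIhom_ext {S T : OIcat} {f g : S ⟶ T} (h : ∀ x, (f.1 x).1 = (g.1 x).1) : f = g :=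
  Subtype.ext (funext fun x => Subtype.ext (h x))

theorem mem_std {m x : ℕ} : x ∈ (stdObj m).carrier ↔ 1 ≤ x ∧ x ≤ m := by
  simp [stdObj]

theorem le_newPt {S : OIcat} {a : ℕ} (h : a ∈ (selfEmb.obj S).carrier) : a ≤ newPt S := by
  rcases Finset.mem_insert.mp h with h | h
  · exact le_of_eq h
  · exact le_of_lt (lt_newPt h)

theorem mem_of_lt_newPt {S : OIcat} {a : ℕ} (h : a ∈ (selfEmb.obj S).carrier)
    (h2 : a < newPt S) : a ∈ S.carrier := by
  rcases Finset.mem_insert.mp h with h | h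
  · omega
  · exact h

/-- The inclusion `S ⟶ ι S`. -/
def OIincl (S : OIcat) : S ⟶ selfEmb.obj S :=
  ⟨fun x => ⟨x.1, Finset.mem_insert_of_mem x.2⟩, fun _ _ h => h⟩

/-- The element `m` of `{1,…,m}`. -/
def topElt (m : ℕ) (hm : 1 ≤ m) : ((stdObj m).carrier : Finset ℕ) :=
  ⟨m, mem_std.mpr ⟨hm, le_rfl⟩⟩

/-- `g : {1,…,m} ⟶ ι S` lands inside `S`. -/
def allIn {m : ℕ} {S : OIcat} (g : stdObj m ⟶ selfEmb.obj S) : Prop :=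
  ∀ x, (g.1 x).1 ∈ S.carrier

theorem hitsTop {m : ℕ} (hm : 1 ≤ m) {S : OIcat} {g : stdObj m ⟶ selfEmb.obj S}
    (h : ¬ allIn g) : (g.1 (topElt m hm)).1 = newPt S := by
  simp only [allIn, not_forall] at h
  obtain ⟨x, hx⟩ := h
  have hxv : (g.1 x).1 = newPt S := by
    rcases Finset.mem_insert.mp (g.1 x).2 with h | h
    · exact h
    · exact absurd h hx
  by_cases hxt : x = topElt m hm
  · rwa [← hxt]
  · exfalso
    have hxlt : x < topElt m hm := by
      have h1 := mem_std.mp x.2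
      have : x.1 ≠ m := fun he => hxt (Subtype.ext he)
      exact Subtype.mk_lt_mk.mpr (by omega)
    have := g.2 hxlt
    have h2 : (g.1 x).1 < (g.1 (topElt m hm)).1 := this
    have h3 := le_newPt (g.1 (topElt m hm)).2
    omega

/-- Corestriction of `g : {1,…,m} ⟶ ι S` with image in `S` to a map `{1,…,m} ⟶ S`. -/
def corestrict {m : ℕ} {S : OIcat} (g : stdObj m ⟶ selfEmb.obj S) (h : allIn g) :
    stdObj m ⟶ S :=
  ⟨fun x => ⟨(g.1 x).1, h x⟩, fun _ _ hlt => g.2 hlt⟩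

/-- The inclusion `{1,…,m-1} ⟶ {1,…,m}`. -/
def stdIncl (m : ℕ) : stdObj (m - 1) ⟶ stdObj m :=
  ⟨fun x => ⟨x.1, mem_std.mpr ⟨(mem_std.mp x.2).1,
      le_trans (mem_std.mp x.2).2 (Nat.sub_le m 1)⟩⟩, fun _ _ h => h⟩

/-- Restriction of `g : {1,…,m} ⟶ ι S` with `g m = ∗` to a map `{1,…,m-1} ⟶ S`. -/
def restrictTop {m : ℕ} (hm : 1 ≤ m) {S : OIcat} (g : stdObj m ⟶ selfEmb.obj S)
    (hQ : (g.1 (topElt m hm)).1 = newPt S) : stdObj (m - 1) ⟶ S := by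
  refine ⟨fun x => ⟨(g.1 ((stdIncl m).1 x)).1, ?_⟩, fun a b hlt => g.2 ((stdIncl m).2 hlt)⟩
  refine mem_of_lt_newPt (g.1 _).2 ?_
  have h1 := mem_std.mp x.2
  have hlt : (stdIncl m).1 x < topElt m hm := Subtype.mk_lt_mk.mpr (by
    show x.1 < m
    omega)
  have h2 : (g.1 ((stdIncl m).1 x)).1 < (g.1 (topElt m hm)).1 := g.2 hlt
  omega

theorem apply_val_congr {S T : OIcat} (f : S ⟶ T) {x y} (e : x.1 = y.1) :
    (f.1 x).1 = (f.1 y).1 := congrArg (fun t => (f.1 t).1) (Subtype.ext e)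

/-- The underlying function of the extension of `h : {1,…,m-1} ⟶ S` to `{1,…,m} ⟶ ι S`
sending `m ↦ ∗`. -/
def extFun (m : ℕ) {S : OIcat} (h : stdObj (m - 1) ⟶ S)
    (x : ((stdObj m).carrier : Finset ℕ)) : ((selfEmb.obj S).carrier : Finset ℕ) :=
  if hx : x.1 ≤ m - 1 then
    ⟨(h.1 ⟨x.1, mem_std.mpr ⟨(mem_std.mp x.2).1, hx⟩⟩).1,
      Finset.mem_insert_of_mem (h.1 _).2⟩
  else ⟨newPt S, Finset.mem_insert_self _ _⟩

theorem extFun_val_pos {m : ℕ} {S : OIcat} (h : stdObj (m - 1) ⟶ S) (x)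
    (hx : x.1 ≤ m - 1) :
    (extFun m h x).1 = (h.1 ⟨x.1, mem_std.mpr ⟨(mem_std.mp x.2).1, hx⟩⟩).1 := by
  rw [extFun, dif_pos hx]

theorem extFun_val_neg {m : ℕ} {S : OIcat} (h : stdObj (m - 1) ⟶ S) (x)
    (hx : ¬ x.1 ≤ m - 1) : (extFun m h x).1 = newPt S := by
  rw [extFun, dif_neg hx]

/-- Extension of `h : {1,…,m-1} ⟶ S` to `{1,…,m} ⟶ ι S` sending `m ↦ ∗`. -/
def extTop (m : ℕ) {S : OIcat} (h : stdObj (m - 1) ⟶ S) : stdObj m ⟶ selfEmb.obj S := by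
  refine ⟨extFun m h, ?_⟩
  intro a b hab
  have hab' : a.1 < b.1 := hab
  have ha := mem_std.mp a.2
  have hb := mem_std.mp b.2
  rw [← Subtype.coe_lt_coe]
  by_cases hA : a.1 ≤ m - 1 <;> by_cases hB : b.1 ≤ m - 1
  · rw [extFun_val_pos h a hA, extFun_val_pos h b hB]
    exact h.2 (Subtype.mk_lt_mk.mpr hab')
  · rw [extFun_val_pos h a hA, extFun_val_neg h b hB]
    exact lt_newPt (h.1 _).2
  · omega
  · omega

theorem comp_val {S T U : OIcat} (f : S ⟶ T) (g : T ⟶ U) (x) :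
    ((f ≫ g).1 x).1 = (g.1 (f.1 x)).1 := rfl

theorem selfEmb_map_val {S T : OIcat} (f : S ⟶ T) (y) :
    ((selfEmb.map f).1 y).1 = (embMap f y).1 := rfl

theorem allIn_comp {m : ℕ} {S T : OIcat} (f : S ⟶ T) (g : stdObj m ⟶ selfEmb.obj S) :
    allIn (g ≫ selfEmb.map f) ↔ allIn g := by
  constructor <;> intro h x <;> have hx := h x
  · by_contra hc
    have h1 : (g.1 x).1 = newPt S := by
      rcases Finset.mem_insert.mp (g.1 x).2 with h | h
      · exact h
      · exact absurd h hc
    have hx' : (embMap f (g.1 x)).1 ∈ T.carrier := hx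
    rw [embMap_val_not_mem f (g.1 x) (by rw [h1]; exact newPt_not_mem S)] at hx'
    exact newPt_not_mem T hx'
  · show (embMap f (g.1 x)).1 ∈ T.carrier
    rw [embMap_val_mem f (g.1 x) hx]
    exact (f.1 _).2

theorem corestrict_comp {m : ℕ} {S T : OIcat} (f : S ⟶ T) (g : stdObj m ⟶ selfEmb.obj S)
    (hP : allIn g) (hP' : allIn (g ≫ selfEmb.map f)) :
    corestrict (g ≫ selfEmb.map f) hP' = corestrict g hP ≫ f := by
  apply OIhom_ext
  intro x
  show (embMap f (g.1 x)).1 = (f.1 ⟨(g.1 x).1, hP x⟩).1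
  rw [embMap_val_mem f (g.1 x) (hP x)]

theorem hQ_comp {m : ℕ} (hm : 1 ≤ m) {S T : OIcat} (f : S ⟶ T)
    (g : stdObj m ⟶ selfEmb.obj S) (hQ : (g.1 (topElt m hm)).1 = newPt S) :
    ((g ≫ selfEmb.map f).1 (topElt m hm)).1 = newPt T := by
  show (embMap f (g.1 (topElt m hm))).1 = newPt T
  exact embMap_val_not_mem f _ (by rw [hQ]; exact newPt_not_mem S)

theorem restrictTop_comp {m : ℕ} (hm : 1 ≤ m) {S T : OIcat} (f : S ⟶ T)
    (g : stdObj m ⟶ selfEmb.obj S) (hQ : (g.1 (topElt m hm)).1 = newPt S)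
    (hQ' : ((g ≫ selfEmb.map f).1 (topElt m hm)).1 = newPt T) :
    restrictTop hm (g ≫ selfEmb.map f) hQ' = restrictTop hm g hQ ≫ f := by
  apply OIhom_ext
  intro x
  have hmem : (g.1 ((stdIncl m).1 x)).1 ∈ S.carrier := ((restrictTop hm g hQ).1 x).2
  show (embMap f (g.1 ((stdIncl m).1 x))).1 = (f.1 ((restrictTop hm g hQ).1 x)).1
  rw [embMap_val_mem f _ hmem]
  exact apply_val_congr f rfl

theorem incl_natural {m : ℕ} {S T : OIcat} (f : S ⟶ T) (g : stdObj m ⟶ S) :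
    (g ≫ f) ≫ OIincl T = (g ≫ OIincl S) ≫ selfEmb.map f := by
  apply OIhom_ext
  intro x
  show (f.1 (g.1 x)).1 = (embMap f ⟨(g.1 x).1, _⟩).1
  rw [embMap_val_mem f _ (g.1 x).2]

theorem ext_natural {m : ℕ} {S T : OIcat} (f : S ⟶ T) (h : stdObj (m - 1) ⟶ S) :
    extTop m (h ≫ f) = extTop m h ≫ selfEmb.map f := by
  apply OIhom_ext
  intro x
  show (extFun m (h ≫ f) x).1 = (embMap f (extFun m h x)).1
  by_cases hx : x.1 ≤ m - 1
  · have h1 := extFun_val_pos h x hx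
    have hmem : (extFun m h x).1 ∈ S.carrier := by rw [h1]; exact (h.1 _).2
    rw [embMap_val_mem f _ hmem, extFun_val_pos (h ≫ f) x hx, comp_val]
    exact congrArg (fun t => (f.1 t).1) (Subtype.ext h1.symm)
  · rw [extFun_val_neg (h ≫ f) x hx]
    exact (embMap_val_not_mem f (extFun m h x)
      (by rw [extFun_val_neg h x hx]; exact newPt_not_mem S)).symm

theorem allIn_incl {m : ℕ} {S : OIcat} (g : stdObj m ⟶ S) : allIn (g ≫ OIincl S) :=
  fun x => (g.1 x).2

theorem corestrict_incl {m : ℕ} {S : OIcat} (g : stdObj m ⟶ S) (h : allIn (g ≫ OIincl S)) :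
    corestrict (g ≫ OIincl S) h = g := by
  apply OIhom_ext
  intro x
  rfl

theorem incl_not_top {m : ℕ} (hm : 1 ≤ m) {S : OIcat} (g : stdObj m ⟶ S) :
    ((g ≫ OIincl S).1 (topElt m hm)).1 ≠ newPt S := fun h =>
  newPt_not_mem S (h ▸ (g.1 (topElt m hm)).2)

theorem extTop_top {m : ℕ} (hm : 1 ≤ m) {S : OIcat} (h : stdObj (m - 1) ⟶ S) :
    ((extTop m h).1 (topElt m hm)).1 = newPt S :=
  extFun_val_neg h _ (by show ¬ m ≤ m - 1; omega)

theorem not_allIn_extTop {m : ℕ} (hm : 1 ≤ m) {S : OIcat} (h : stdObj (m - 1) ⟶ S) :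
    ¬ allIn (extTop m h) := fun hP => by
  have := hP (topElt m hm)
  rw [extTop_top hm h] at this
  exact newPt_not_mem S this

theorem restrictTop_extTop {m : ℕ} (hm : 1 ≤ m) {S : OIcat} (h : stdObj (m - 1) ⟶ S)
    (hQ : ((extTop m h).1 (topElt m hm)).1 = newPt S) :
    restrictTop hm (extTop m h) hQ = h := by
  apply OIhom_ext
  intro x
  show (extFun m h ((stdIncl m).1 x)).1 = (h.1 x).1
  rw [extFun_val_pos h _ (mem_std.mp x.2).2]
  exact apply_val_congr h rfl

theorem recomb_allIn {m : ℕ} {S : OIcat} (g : stdObj m ⟶ selfEmb.obj S) (hP : allIn g) :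
    corestrict g hP ≫ OIincl S = g := by
  apply OIhom_ext
  intro x
  rfl

theorem recomb_top {m : ℕ} (hm : 1 ≤ m) {S : OIcat} (g : stdObj m ⟶ selfEmb.obj S)
    (hQ : (g.1 (topElt m hm)).1 = newPt S) :
    extTop m (restrictTop hm g hQ) = g := by
  apply OIhom_ext
  intro x
  show (extFun m (restrictTop hm g hQ) x).1 = (g.1 x).1
  by_cases hx : x.1 ≤ m - 1
  · rw [extFun_val_pos _ x hx]
    exact apply_val_congr g rfl
  · have hxm := mem_std.mp x.2
    have hxe : x = topElt m hm := Subtype.ext (show x.1 = m by omega)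
    rw [extFun_val_neg _ x hx, hxe, hQ]

open ModuleCat in
open Classical in
/-- `φ₁ : Σ P_m ⟶ P_m`, sending a basis element `g` landing in `S` to its corestriction,
and the others to `0`. -/
noncomputable def phi1 (k : Type) [Field k] (m : ℕ) : (selfEmb ⋙ Pmod k m) ⟶ Pmod k m where
  app S := freeDesc (M := (ModuleCat.free k).obj (stdObj m ⟶ S))
    (↾fun (g : stdObj m ⟶ selfEmb.obj S) =>
    if h : allIn g then freeMk (corestrict g h) else 0)
  naturality S T f := by
    refine free_hom_ext (X := stdObj m ⟶ selfEmb.obj S) fun g => ?_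
    show freeDesc _ ((ModuleCat.free k).map (↾fun g => g ≫ selfEmb.map f) (freeMk g))
      = (ModuleCat.free k).map (↾fun g => g ≫ f) (freeDesc _ (freeMk g))
    rw [free_map_apply, freeDesc_apply, freeDesc_apply]
    simp only [TypeCat.ofHom_apply]
    by_cases h : allIn g
    · rw [dif_pos h, dif_pos ((allIn_comp f g).mpr h), free_map_apply,
        corestrict_comp f g h, TypeCat.ofHom_apply]
    · rw [dif_neg h, dif_neg (fun hh => h ((allIn_comp f g).mp hh)), map_zero]

open ModuleCat in
open Classical in
/-- `φ₂ : Σ P_m ⟶ P_{m-1}`, sending a basis element `g` with `g m = ∗` to its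
restriction, and the others to `0`. -/
noncomputable def phi2 (k : Type) [Field k] (m : ℕ) (hm : 1 ≤ m) :
    (selfEmb ⋙ Pmod k m) ⟶ Pmod k (m - 1) where
  app S := freeDesc (M := (ModuleCat.free k).obj (stdObj (m - 1) ⟶ S))
    (↾fun (g : stdObj m ⟶ selfEmb.obj S) => if h : allIn g then 0
    else freeMk (restrictTop hm g (hitsTop hm h)))
  naturality S T f := by
    refine free_hom_ext (X := stdObj m ⟶ selfEmb.obj S) fun g => ?_
    show freeDesc _ ((ModuleCat.free k).map (↾fun g => g ≫ selfEmb.map f) (freeMk g))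
      = (ModuleCat.free k).map (↾fun g => g ≫ f) (freeDesc _ (freeMk g))
    rw [free_map_apply, freeDesc_apply, freeDesc_apply]
    simp only [TypeCat.ofHom_apply]
    by_cases h : allIn g
    · rw [dif_pos h, dif_pos ((allIn_comp f g).mpr h), map_zero]
    · rw [dif_neg h, dif_neg (fun hh => h ((allIn_comp f g).mp hh)), free_map_apply,
        restrictTop_comp hm f g (hitsTop hm h), TypeCat.ofHom_apply]

open ModuleCat in
/-- `ψ₁ : P_m ⟶ Σ P_m`, induced by postcomposition with the inclusion `S ⟶ ι S`. -/
noncomputable def psi1 (k : Type) [Field k] (m : ℕ) : Pmod k m ⟶ (selfEmb ⋙ Pmod k m) where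
  app S := (ModuleCat.free k).map (↾fun g => g ≫ OIincl S)
  naturality S T f := by
    refine free_hom_ext (X := stdObj m ⟶ S) fun g => ?_
    show (ModuleCat.free k).map _ ((ModuleCat.free k).map (↾fun g => g ≫ f) (freeMk g))
      = (ModuleCat.free k).map (↾fun g => g ≫ selfEmb.map f)
        ((ModuleCat.free k).map _ (freeMk g))
    rw [free_map_apply, free_map_apply, free_map_apply, free_map_apply]
    exact congrArg freeMk (incl_natural f g)

open ModuleCat in
/-- `ψ₂ : P_{m-1} ⟶ Σ P_m`, induced by extension by `m ↦ ∗`. -/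
noncomputable def psi2 (k : Type) [Field k] (m : ℕ) :
    Pmod k (m - 1) ⟶ (selfEmb ⋙ Pmod k m) where
  app S := (ModuleCat.free k).map (↾extTop m)
  naturality S T f := by
    refine free_hom_ext (X := stdObj (m - 1) ⟶ S) fun h => ?_
    show (ModuleCat.free k).map (↾extTop m) ((ModuleCat.free k).map (↾fun g => g ≫ f) (freeMk h))
      = (ModuleCat.free k).map (↾fun g => g ≫ selfEmb.map f)
        ((ModuleCat.free k).map (↾extTop m) (freeMk h))
    rw [free_map_apply, free_map_apply, free_map_apply, free_map_apply]
    exact congrArg freeMk (ext_natural f h)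

open ModuleCat in
theorem psi1_phi1 (k : Type) [Field k] (m : ℕ) :
    psi1 k m ≫ phi1 k m = 𝟙 (Pmod k m) := by
  refine NatTrans.ext (funext fun S => ?_)
  refine free_hom_ext (X := stdObj m ⟶ S) fun g => ?_
  show freeDesc _ ((free k).map (↾fun g => g ≫ OIincl S) (freeMk g)) = freeMk g
  rw [free_map_apply, freeDesc_apply, TypeCat.ofHom_apply, TypeCat.ofHom_apply, dif_pos (allIn_incl g), corestrict_incl]

open ModuleCat in
theorem psi1_phi2 (k : Type) [Field k] (m : ℕ) (hm : 1 ≤ m) :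
    psi1 k m ≫ phi2 k m hm = 0 := by
  refine NatTrans.ext (funext fun S => ?_)
  refine free_hom_ext (X := stdObj m ⟶ S) fun g => ?_
  show freeDesc _ ((free k).map (↾fun g => g ≫ OIincl S) (freeMk g)) = 0
  rw [free_map_apply, freeDesc_apply, TypeCat.ofHom_apply, TypeCat.ofHom_apply, dif_pos (allIn_incl g)]

open ModuleCat in
theorem psi2_phi1 (k : Type) [Field k] (m : ℕ) (hm : 1 ≤ m) :
    psi2 k m ≫ phi1 k m = 0 := by
  refine NatTrans.ext (funext fun S => ?_)
  refine free_hom_ext (X := stdObj (m - 1) ⟶ S) fun h => ?_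
  show freeDesc _ ((free k).map (↾extTop m) (freeMk h)) = 0
  rw [free_map_apply, freeDesc_apply, TypeCat.ofHom_apply, TypeCat.ofHom_apply, dif_neg (not_allIn_extTop hm h)]

open ModuleCat in
theorem psi2_phi2 (k : Type) [Field k] (m : ℕ) (hm : 1 ≤ m) :
    psi2 k m ≫ phi2 k m hm = 𝟙 (Pmod k (m - 1)) := by
  refine NatTrans.ext (funext fun S => ?_)
  refine free_hom_ext (X := stdObj (m - 1) ⟶ S) fun h => ?_
  show freeDesc _ ((free k).map (↾extTop m) (freeMk h)) = freeMk h
  rw [free_map_apply, freeDesc_apply, TypeCat.ofHom_apply, TypeCat.ofHom_apply, dif_neg (not_allIn_extTop hm h),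
    restrictTop_extTop hm h]

open ModuleCat in
theorem phi_psi_sum (k : Type) [Field k] (m : ℕ) (hm : 1 ≤ m) :
    phi1 k m ≫ psi1 k m + phi2 k m hm ≫ psi2 k m = 𝟙 (selfEmb ⋙ Pmod k m) := by
  refine NatTrans.ext (funext fun S => ?_)
  rw [NatTrans.app_add]
  refine free_hom_ext (X := stdObj m ⟶ selfEmb.obj S) fun g => ?_
  show (free k).map (↾fun g => g ≫ OIincl S) (freeDesc _ (freeMk g))
      + (free k).map (↾extTop m) (freeDesc _ (freeMk g)) = freeMk g
  rw [freeDesc_apply, freeDesc_apply, TypeCat.ofHom_apply, TypeCat.ofHom_apply]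
  by_cases h : allIn g
  · rw [dif_pos h, dif_pos h, map_zero, add_zero, free_map_apply, TypeCat.ofHom_apply, recomb_allIn g h]
  · rw [dif_neg h, dif_neg h, map_zero, zero_add, free_map_apply, TypeCat.ofHom_apply,
      recomb_top hm g (hitsTop hm h)]

theorem shift_of_Pm (k : Type) [Field k] (m : ℕ) (hm : 1 ≤ m) :
    Nonempty ((selfEmb ⋙ Pmod k m) ≅ (Pmod k m ⊞ Pmod k (m - 1))) := by
  refine ⟨⟨biprod.lift (phi1 k m) (phi2 k m hm), biprod.desc (psi1 k m) (psi2 k m), ?_, ?_⟩⟩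
  · rw [biprod.lift_desc, phi_psi_sum k m hm]
  · apply biprod.hom_ext' <;> apply biprod.hom_ext <;>
      simp [psi1_phi1, psi1_phi2 k m hm, psi2_phi1 k m hm, psi2_phi2 k m hm,
        biprod.inl_desc_assoc, biprod.inr_desc_assoc]
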